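/- Define K(x,t) = Σ_{k=1}^∞ (2((-1)^k - 1)/(Π₁kπ)) e^{-ν(πk/h)²t} sin(πkx/h) for t > 0, x ∈ [0,h]. Then for every x ∈ [0,h] and t ∈ ℝ, ∫_{-∞}^t K(x, t-τ) dτ = -x(h-x)/(2Π₁ν). -/

import Mathlib

open MeasureTheory Real Set

private lemma aux_exp_integral {a : ℝ} (ha : 0 < a) :
    ∫ s in Set.Ioi (0:ℝ), Real.exp (-(a * s)) = 1 / a := by
  have h1 := MeasureTheory.integral_comp_mul_left_Ioi (fun y => Real.exp (-y)) 0 ha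
  simp only [mul_zero, integral_exp_neg_Ioi_zero, smul_eq_mul, mul_one] at h1
  rw [h1, one_div]

private lemma bern3_eval (y : ℝ) :
    (Polynomial.map (algebraMap ℚ ℝ) (Polynomial.bernoulli 3)).eval y
      = y ^ 3 - 3 / 2 * y ^ 2 + 1 / 2 * y := by
  rw [Polynomial.eval_map]
  simp_rw [Polynomial.bernoulli, Finset.sum_range_succ, Finset.sum_range_zero,
    Polynomial.eval₂_add, Polynomial.eval₂_zero, Polynomial.eval₂_monomial]
  rw [bernoulli_one, bernoulli_eq_bernoulli'_of_ne_one zero_ne_one, bernoulli'_zero,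
    bernoulli_eq_bernoulli'_of_ne_one (by decide), bernoulli'_two,
    bernoulli_eq_bernoulli'_of_ne_one (by decide), bernoulli'_three]
  push_cast
  norm_num
  ring

/-- For the kernel `K(x,t) = Σ_{k≥1} (2((-1)^k-1)/(Π₁kπ)) e^{-ν(πk/h)²t} sin(πkx/h)`,
one has `∫_{-∞}^t K(x,t-τ)dτ = -x(h-x)/(2Π₁ν)` for every `x ∈ [0,h]` and `t ∈ ℝ`. -/
theorem kernel_time_integral
    (h ν Pi₁ : ℝ) (hh : 0 < h) (hν : 0 < ν) (hPi₁ : 0 < Pi₁)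
    (K : ℝ → ℝ → ℝ)
    (hK : ∀ x t : ℝ, K x t =
      ∑' k : ℕ+, 2 * ((-1 : ℝ) ^ (k : ℕ) - 1) / (Pi₁ * (k : ℝ) * Real.pi) *
        Real.exp (-ν * (Real.pi * (k : ℝ) / h) ^ 2 * t) *
        Real.sin (Real.pi * (k : ℝ) * x / h)) :
    ∀ x ∈ Set.Icc (0:ℝ) h, ∀ t : ℝ,
      (∫ τ in Set.Iio t, K x (t - τ)) = -(x * (h - x)) / (2 * Pi₁ * ν) := by
  intro x hx t
  obtain ⟨hx0, hxh⟩ := hx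
  have hπ : (0:ℝ) < Real.pi := Real.pi_pos
  have hh0 : (h:ℝ) ≠ 0 := ne_of_gt hh
  -- notation
  set A : ℕ+ → ℝ := fun k => ν * (Real.pi * (k : ℝ) / h) ^ 2 with hA
  set c : ℕ+ → ℝ := fun k => 2 * ((-1 : ℝ) ^ (k : ℕ) - 1) / (Pi₁ * (k : ℝ) * Real.pi) with hc
  set G : ℕ+ → ℝ → ℝ := fun k s =>
    c k * Real.exp (-(A k * s)) * Real.sin (Real.pi * (k : ℝ) * x / h) with hG
  have hkpos : ∀ k : ℕ+, (0:ℝ) < (k:ℝ) := fun k => by exact_mod_cast k.pos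
  have hApos : ∀ k : ℕ+, 0 < A k := fun k =>
    mul_pos hν (pow_pos (div_pos (mul_pos hπ (hkpos k)) hh) 2)
  -- Step 1: change of variables
  have step1 : (∫ τ in Set.Iio t, K x (t - τ)) = ∫ s in Set.Ioi (0:ℝ), K x s := by
    have hmp : MeasurePreserving (fun τ : ℝ => t - τ) volume volume :=
      Measure.measurePreserving_sub_left volume t
    have hemb : MeasurableEmbedding (fun τ : ℝ => t - τ) :=
      (MeasurableEquiv.subLeft t).measurableEmbedding
    have h2 := hmp.setIntegral_preimage_emb hemb (K x) (Set.Ioi 0)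
    have hpre : (fun τ : ℝ => t - τ) ⁻¹' Set.Ioi 0 = Set.Iio t := by ext τ; simp [sub_pos]
    rw [hpre] at h2
    exact h2
  -- the integrand as a tsum of G
  have hKG : ∀ s : ℝ, K x s = ∑' k : ℕ+, G k s := by
    intro s
    rw [hK]
    congr 1
    funext k
    simp only [hG, hc, hA, neg_mul]
  -- integrability of each term
  have hInt : ∀ k : ℕ+, IntegrableOn (G k) (Set.Ioi 0) := by
    intro k
    have := ((exp_neg_integrableOn_Ioi 0 (hApos k)).const_mul (c k)).mul_const
      (Real.sin (Real.pi * (k : ℝ) * x / h))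
    show IntegrableOn (fun s => c k * Real.exp (-(A k * s)) * Real.sin (Real.pi * (k : ℝ) * x / h)) (Set.Ioi 0)
    simp only [neg_mul] at this
    exact this
  -- exact value of the norm integrals
  have hnorm : ∀ k : ℕ+, (∫ s in Set.Ioi (0:ℝ), ‖G k s‖)
      = |c k * Real.sin (Real.pi * (k : ℝ) * x / h)| * (1 / A k) := by
    intro k
    have he : ∀ s : ℝ, ‖G k s‖
        = |c k * Real.sin (Real.pi * (k : ℝ) * x / h)| * Real.exp (-(A k * s)) := by
      intro s
      simp only [hG, Real.norm_eq_abs, abs_mul, Real.abs_exp]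
      ring
    simp_rw [he]
    rw [MeasureTheory.integral_const_mul, aux_exp_integral (hApos k)]
  -- summability of the norm integrals
  have hsum3 : Summable (fun k : ℕ+ => 1 / ((k:ℕ):ℝ) ^ 3) := by
    have hs : Summable (fun n : ℕ => 1 / (n:ℝ) ^ 3) :=
      Real.summable_one_div_nat_pow.mpr (by norm_num)
    have hz : ∀ n : ℕ, n ∉ Set.range (fun k : ℕ+ => (k:ℕ)) → 1 / (n:ℝ) ^ 3 = 0 := by
      intro n hn
      have : n = 0 := by
        by_contra hne
        exact hn ⟨⟨n, Nat.pos_of_ne_zero hne⟩, rfl⟩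
      subst this; simp
    exact (Function.Injective.hasSum_iff (fun a b hab => PNat.coe_injective hab) hz).mpr
      hs.hasSum |>.summable
  have hsumnorm : Summable (fun k : ℕ+ => ∫ s in Set.Ioi (0:ℝ), ‖G k s‖) := by
    apply Summable.of_nonneg_of_le
      (fun k => integral_nonneg fun s => norm_nonneg _)
      (fun k => ?_)
      (hsum3.mul_left ((4 / (Pi₁ * Real.pi)) * (h ^ 2 / ν)))
    rw [hnorm k]
    have hck : |c k| ≤ 4 / (Pi₁ * (k:ℝ) * Real.pi) := by
      rw [hc, abs_div, abs_of_pos (mul_pos (mul_pos hPi₁ (hkpos k)) hπ)]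
      gcongr
      calc |2 * ((-1 : ℝ) ^ (k:ℕ) - 1)| ≤ 2 * 2 := by
            rw [abs_mul, abs_two]
            have : |(-1 : ℝ) ^ (k:ℕ) - 1| ≤ |(-1:ℝ)^(k:ℕ)| + |(1:ℝ)| := abs_sub _ _
            simp only [abs_pow, abs_neg, abs_one, one_pow] at this
            linarith
        _ = 4 := by norm_num
    have hsk : |Real.sin (Real.pi * (k : ℝ) * x / h)| ≤ 1 := Real.abs_sin_le_one _
    have hAinv : 1 / A k = h ^ 2 / (ν * Real.pi ^ 2 * (k:ℝ) ^ 2) := by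
      rw [hA]
      field_simp
    rw [abs_mul, hAinv]
    have h1 : |c k| * |Real.sin (Real.pi * (k : ℝ) * x / h)| ≤ 4 / (Pi₁ * (k:ℝ) * Real.pi) :=
      calc |c k| * |Real.sin (Real.pi * (k : ℝ) * x / h)| ≤ |c k| * 1 :=
            mul_le_mul_of_nonneg_left hsk (abs_nonneg _)
        _ = |c k| := mul_one _
        _ ≤ 4 / (Pi₁ * (k:ℝ) * Real.pi) := hck
    calc |c k| * |Real.sin (Real.pi * (k : ℝ) * x / h)|
          * (h ^ 2 / (ν * Real.pi ^ 2 * (k:ℝ) ^ 2))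
        ≤ (4 / (Pi₁ * (k:ℝ) * Real.pi)) * (h ^ 2 / (ν * Real.pi ^ 2 * (k:ℝ) ^ 2)) := by
          apply mul_le_mul_of_nonneg_right h1 (by positivity)
      _ = 4 * h ^ 2 / (Pi₁ * (k:ℝ) * Real.pi * (ν * Real.pi ^ 2 * (k:ℝ) ^ 2)) := by
          rw [div_mul_div_comm]
      _ ≤ 4 * h ^ 2 / (Pi₁ * Real.pi * ν * ((k:ℕ):ℝ) ^ 3) := by
          have hπ1 : (1:ℝ) ≤ Real.pi ^ 2 := by nlinarith [Real.pi_gt_three]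
          have hpos : 0 < Pi₁ * Real.pi * ν * ((k:ℕ):ℝ) ^ 3 :=
            mul_pos (mul_pos (mul_pos hPi₁ hπ) hν) (pow_pos (hkpos k) 3)
          have hkey : Pi₁ * Real.pi * ν * ((k:ℕ):ℝ) ^ 3
              ≤ Pi₁ * (k:ℝ) * Real.pi * (ν * Real.pi ^ 2 * (k:ℝ) ^ 2) := by
            have h2 : (0:ℝ) ≤ Pi₁ * Real.pi * ν * (k:ℝ) ^ 3 := le_of_lt hpos
            have h3 : (0:ℝ) ≤ Real.pi ^ 2 - 1 := by linarith
            nlinarith [mul_nonneg h2 h3]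
          exact div_le_div_of_nonneg_left (by positivity) hpos hkey
      _ = (4 / (Pi₁ * Real.pi)) * (h ^ 2 / ν) * (1 / ((k:ℕ):ℝ) ^ 3) := by
          rw [div_mul_div_comm, div_mul_div_comm, mul_one]
  -- Step 2: swap integral and sum
  have step2 : (∫ s in Set.Ioi (0:ℝ), K x s) = ∑' k : ℕ+, ∫ s in Set.Ioi (0:ℝ), G k s := by
    rw [show (fun s => K x s) = fun s => ∑' k : ℕ+, G k s from funext hKG]
    exact (MeasureTheory.integral_tsum_of_summable_integral_norm hInt hsumnorm).symm
  -- Step 3: each integral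
  have step3 : ∀ k : ℕ+, (∫ s in Set.Ioi (0:ℝ), G k s)
      = c k * Real.sin (Real.pi * (k : ℝ) * x / h) * (1 / A k) := by
    intro k
    have : G k = fun s => (c k * Real.sin (Real.pi * (k : ℝ) * x / h))
        * Real.exp (-(A k * s)) := by
      funext s; rw [hG]; ring
    rw [this, MeasureTheory.integral_const_mul, aux_exp_integral (hApos k)]
  -- Step 4: evaluate the series
  have hu : x / (2 * h) ∈ Set.Icc (0:ℝ) 1 := by
    constructor
    · positivity
    · rw [div_le_one (by positivity)]; linarith
  have hu' : x / (2 * h) + 1 / 2 ∈ Set.Icc (0:ℝ) 1 := by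
    have hle : x / (2 * h) ≤ 1 / 2 := by
      rw [div_le_div_iff₀ (by positivity) (by norm_num)]; linarith
    constructor
    · positivity
    · linarith
  have HA := hasSum_one_div_nat_pow_mul_sin one_ne_zero hu
  have HB := hasSum_one_div_nat_pow_mul_sin one_ne_zero hu'
  have Hg : HasSum (fun n : ℕ => ((-1:ℝ) ^ n - 1) * (1 / (n:ℝ) ^ 3)
      * Real.sin (Real.pi * n * x / h))
      ((-1 : ℝ) ^ (1 + 1) * (2 * Real.pi) ^ (2 * 1 + 1) / 2 / ((2 * 1 + 1).factorial : ℝ) *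
        ((Polynomial.map (algebraMap ℚ ℝ) (Polynomial.bernoulli (2 * 1 + 1))).eval
          (x / (2 * h) + 1 / 2))
      - (-1 : ℝ) ^ (1 + 1) * (2 * Real.pi) ^ (2 * 1 + 1) / 2 / ((2 * 1 + 1).factorial : ℝ) *
        ((Polynomial.map (algebraMap ℚ ℝ) (Polynomial.bernoulli (2 * 1 + 1))).eval
          (x / (2 * h)))) := by
    have H := HB.sub HA
    have hfe : (fun n : ℕ => 1 / (n : ℝ) ^ (2 * 1 + 1)
          * Real.sin (2 * Real.pi * n * (x / (2 * h) + 1 / 2))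
        - 1 / (n : ℝ) ^ (2 * 1 + 1) * Real.sin (2 * Real.pi * n * (x / (2 * h))))
        = fun n : ℕ => ((-1:ℝ) ^ n - 1) * (1 / (n:ℝ) ^ 3)
          * Real.sin (Real.pi * n * x / h) := by
      funext n
      rw [show 2 * Real.pi * (n:ℝ) * (x / (2 * h) + 1 / 2)
            = Real.pi * n * x / h + (n:ℝ) * Real.pi from by field_simp,
        Real.sin_add_nat_mul_pi,
        show 2 * Real.pi * (n:ℝ) * (x / (2 * h)) = Real.pi * n * x / h from by
          field_simp]
      norm_num
      ring
    rw [hfe] at H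
    exact H
  -- restrict to ℕ+
  have hz : ∀ n : ℕ, n ∉ Set.range (fun k : ℕ+ => (k:ℕ)) →
      ((-1:ℝ) ^ n - 1) * (1 / (n:ℝ) ^ 3) * Real.sin (Real.pi * n * x / h) = 0 := by
    intro n hn
    have : n = 0 := by
      by_contra hne
      exact hn ⟨⟨n, Nat.pos_of_ne_zero hne⟩, rfl⟩
    subst this; simp
  have Hp := (Function.Injective.hasSum_iff
    (fun a b hab => PNat.coe_injective hab) hz).mpr Hg
  -- rewrite our series in terms of Hp
  set D : ℝ := ((-1 : ℝ) ^ (1 + 1) * (2 * Real.pi) ^ (2 * 1 + 1) / 2 / ((2 * 1 + 1).factorial : ℝ) *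
        ((Polynomial.map (algebraMap ℚ ℝ) (Polynomial.bernoulli (2 * 1 + 1))).eval
          (x / (2 * h) + 1 / 2))
      - (-1 : ℝ) ^ (1 + 1) * (2 * Real.pi) ^ (2 * 1 + 1) / 2 / ((2 * 1 + 1).factorial : ℝ) *
        ((Polynomial.map (algebraMap ℚ ℝ) (Polynomial.bernoulli (2 * 1 + 1))).eval
          (x / (2 * h)))) with hD
  set Cst : ℝ := 2 * h ^ 2 / (Pi₁ * ν * Real.pi ^ 3) with hCst
  have hterm : (fun k : ℕ+ => c k * Real.sin (Real.pi * (k : ℝ) * x / h) * (1 / A k))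
      = fun k : ℕ+ => Cst * ((((-1:ℝ) ^ (k:ℕ) - 1) * (1 / ((k:ℕ):ℝ) ^ 3)
          * Real.sin (Real.pi * (k:ℕ) * x / h))) := by
    funext k
    have hk0 : ((k:ℕ):ℝ) ≠ 0 := ne_of_gt (hkpos k)
    have hkk : ((k:ℕ):ℝ) = (k:ℝ) := rfl
    rw [hc, hA, hCst, hkk]
    field_simp
  have Htotal : HasSum (fun k : ℕ+ => c k * Real.sin (Real.pi * (k : ℝ) * x / h) * (1 / A k))
      (Cst * D) := by
    rw [hterm]
    exact Hp.mul_left Cst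
  -- conclude
  rw [step1, step2]
  simp_rw [step3]
  rw [Htotal.tsum_eq, hD, hCst]
  rw [bern3_eval, bern3_eval]
  have hfact : (((2 * 1 + 1).factorial : ℝ) : ℝ) = 6 := by norm_num [Nat.factorial]
  rw [hfact]
  have hπ0 : Real.pi ≠ 0 := ne_of_gt hπ
  field_simp
  ring
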